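/- For k ∈ (0,1) let j(ξ) = sn(ξ,k), and define V(ξ) = cn(ξ,k)·dn(ξ,k) + sn(ξ,k)·[E(ξ,k) - (E(k)/K(k))·ξ], where E(ξ,k) = ∫₀^ξ dn²(y,k) dy, and K(k), E(k) are the complete elliptic integrals. Then with 𝓛_- = -∂_ξ² - (1+k²) + 2k² j², one has 𝓛_- V = -2(1 - E(k)/K(k)) j' pointwise on ℝ. -/

import Mathlib

theorem stmt13 (k : ℝ) (hk : k ∈ Set.Ioo (0:ℝ) 1)
    (sn cn dn : ℝ → ℝ)
    (hsn : ∀ ξ : ℝ, HasDerivAt sn (cn ξ * dn ξ) ξ)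
    (hcn : ∀ ξ : ℝ, HasDerivAt cn (-(sn ξ * dn ξ)) ξ)
    (hdn : ∀ ξ : ℝ, HasDerivAt dn (-(k^2 * sn ξ * cn ξ)) ξ)
    (hsn0 : sn 0 = 0) (hcn0 : cn 0 = 1) (hdn0 : dn 0 = 1)
    (hdn2 : ∀ ξ : ℝ, (dn ξ)^2 = 1 - k^2*(sn ξ)^2)
    (hcn2 : ∀ ξ : ℝ, (cn ξ)^2 = 1 - (sn ξ)^2)
    (K E : ℝ)
    (hK : K = ∫ θ in (0:ℝ)..(Real.pi/2), 1 / Real.sqrt (1 - k^2 * Real.sin θ ^ 2))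
    (hE : E = ∫ θ in (0:ℝ)..(Real.pi/2), Real.sqrt (1 - k^2 * Real.sin θ ^ 2))
    (V : ℝ → ℝ)
    (hV : ∀ ξ : ℝ, V ξ = cn ξ * dn ξ
        + sn ξ * ((∫ y in (0:ℝ)..ξ, (dn y)^2) - (E/K) * ξ)) :
    ∀ ξ : ℝ, -(deriv (deriv V) ξ) + (-(1+k^2) + 2*k^2*(sn ξ)^2) * V ξ
      = -2 * (1 - E/K) * (cn ξ * dn ξ) := by
  have hdncont : Continuous fun y => (dn y)^2 := by
    have : Differentiable ℝ dn := fun y => (hdn y).differentiableAt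
    exact (this.continuous).pow 2
  have hW : ∀ ξ : ℝ, HasDerivAt (fun x => (∫ y in (0:ℝ)..x, (dn y)^2) - E/K*x)
      ((dn ξ)^2 - E/K) ξ := by
    intro ξ
    have h1 : HasDerivAt (fun x => ∫ y in (0:ℝ)..x, (dn y)^2) ((dn ξ)^2) ξ :=
      intervalIntegral.integral_hasDerivAt_right (hdncont.intervalIntegrable _ _)
        (hdncont.stronglyMeasurableAtFilter _ _) hdncont.continuousAt
    exact (h1.sub ((hasDerivAt_id ξ).const_mul (E/K))).congr_deriv (by ring)
  have hVf : V = fun x => cn x * dn x + sn x * ((∫ y in (0:ℝ)..x, (dn y)^2) - E/K*x) :=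
    funext hV
  have hV1 : ∀ ξ : ℝ, HasDerivAt V
      (-(sn ξ * dn ξ) * dn ξ + cn ξ * -(k^2 * sn ξ * cn ξ)
        + (cn ξ * dn ξ * ((∫ y in (0:ℝ)..ξ, (dn y)^2) - E/K*ξ)
          + sn ξ * ((dn ξ)^2 - E/K))) ξ := by
    intro ξ
    rw [hVf]
    exact ((hcn ξ).mul (hdn ξ)).add ((hsn ξ).mul (hW ξ))
  have hderivV : deriv V = fun x =>
      -(sn x * dn x) * dn x + cn x * -(k^2 * sn x * cn x)
        + (cn x * dn x * ((∫ y in (0:ℝ)..x, (dn y)^2) - E/K*x)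
          + sn x * ((dn x)^2 - E/K)) :=
    funext fun ξ => (hV1 ξ).deriv
  intro ξ
  have h2 : deriv (deriv V) ξ =
      cn ξ * dn ξ^3 - k^2 * cn ξ^3 * dn ξ + 2*k^2 * sn ξ^2 * cn ξ * dn ξ
        - 2*(E/K) * cn ξ * dn ξ
        - (sn ξ * dn ξ^2 + k^2 * sn ξ * cn ξ^2)
            * ((∫ y in (0:ℝ)..ξ, (dn y)^2) - E/K*ξ) := by
    rw [hderivV]
    have h := ((((hsn ξ).mul (hdn ξ)).neg.mul (hdn ξ)).add
        ((hcn ξ).mul ((((hsn ξ).const_mul (k^2)).mul (hcn ξ)).neg))).add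
      ((((hcn ξ).mul (hdn ξ)).mul (hW ξ)).add
        ((hsn ξ).mul (((hdn ξ).pow 2).sub_const (E/K))))
    refine h.deriv.trans ?_
    simp only [Pi.mul_apply, Pi.neg_apply, Pi.pow_apply, Pi.sub_apply]
    ring
  rw [h2, hV ξ]
  linear_combination
    (-(cn ξ * dn ξ) + sn ξ * ((∫ y in (0:ℝ)..ξ, (dn y)^2) - E/K*ξ)) * hdn2 ξ
    + (k^2 * cn ξ * dn ξ + k^2 * sn ξ * ((∫ y in (0:ℝ)..ξ, (dn y)^2) - E/K*ξ)) * hcn2 ξ
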